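/- For any fixed f, g ∈ ℝ^n, the map λ ↦ F(f,g,λ) is concave on Δ^N, its gradient in λ is (c_∞²/η)-Lipschitz: for all λ¹, λ² ∈ Δ^N, ‖∇_λ F(f,g,λ¹) − ∇_λ F(f,g,λ²)‖_2 ≤ (c_∞²/η)‖λ¹ − λ²‖_2, and consequently F(f,g,λ¹) ≥ F(f,g,λ²) + ⟨∇_λ F(f,g,λ²), λ¹ − λ²⟩ − (c_∞²/(2η))‖λ¹ − λ²‖_2² for all λ¹, λ² ∈ Δ^N. -/

import Mathlib

open scoped BigOperators

noncomputable section

namespace EOT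

/-- Square matrices as functions. -/
abbrev Mat (n : ℕ) := Fin n → Fin n → ℝ

/-- Frobenius inner product ⟨A, B⟩ = Σ_{i,j} A_{ij} B_{ij}. -/
def frob {n : ℕ} (A B : Mat n) : ℝ := ∑ i, ∑ j, A i j * B i j

/-- Row-sum vector r(A) = A 𝟙. -/
def rowSum {n : ℕ} (A : Mat n) : Fin n → ℝ := fun i => ∑ j, A i j

/-- Column-sum vector c(A) = Aᵀ 𝟙. -/
def colSum {n : ℕ} (A : Mat n) : Fin n → ℝ := fun j => ∑ i, A i j

/-- Entrywise ℓ₁ norm of a matrix. -/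
def mnorm1 {n : ℕ} (A : Mat n) : ℝ := ∑ i, ∑ j, |A i j|

/-- ℓ₁ norm of a vector. -/
def vnorm1 {m : ℕ} (v : Fin m → ℝ) : ℝ := ∑ i, |v i|

/-- Euclidean (ℓ₂) norm of a vector. -/
def vnorm2 {m : ℕ} (v : Fin m → ℝ) : ℝ := Real.sqrt (∑ i, v i ^ 2)

/-- c_∞ := max_{k,i,j} |C^k_{ij}|. -/
def cinf {n N : ℕ} (C : Fin N → Mat n) : ℝ := ⨆ k, ⨆ i, ⨆ j, |C k i j|

/-- ι := min_j log b_j. -/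
def iotaMin {n : ℕ} (b : Fin n → ℝ) : ℝ := ⨅ j, Real.log (b j)

/-- ζ^k(f,g,λ)_{ij} = exp((f_i + g_j − λ_k C^k_{ij})/η). -/
def zeta {n N : ℕ} (η : ℝ) (C : Fin N → Mat n) (f g : Fin n → ℝ)
    (lam : Fin N → ℝ) (k : Fin N) : Mat n :=
  fun i j => Real.exp ((f i + g j - lam k * C k i j) / η)

/-- π^k(f,g,λ) = ζ^k(f,g,λ) / Σ_{k'} ‖ζ^{k'}(f,g,λ)‖₁. -/
def piMat {n N : ℕ} (η : ℝ) (C : Fin N → Mat n) (f g : Fin n → ℝ)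
    (lam : Fin N → ℝ) (k : Fin N) : Mat n :=
  fun i j => zeta η C f g lam k i j / ∑ k', mnorm1 (zeta η C f g lam k')

/-- The dual objective F(f,g,λ) = ⟨f,a⟩ + ⟨g,b⟩ − η log(Σ_k ‖ζ^k‖₁) − η. -/
def Fdual {n N : ℕ} (η : ℝ) (C : Fin N → Mat n) (a b : Fin n → ℝ)
    (f g : Fin n → ℝ) (lam : Fin N → ℝ) : ℝ :=
  (∑ i, f i * a i) + (∑ j, g j * b j)
    - η * Real.log (∑ k, mnorm1 (zeta η C f g lam k)) - η

/-- Gradient of F with respect to λ: (∇_λ F)_k = ⟨π^k(f,g,λ), C^k⟩. -/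
def gradLam {n N : ℕ} (η : ℝ) (C : Fin N → Mat n) (f g : Fin n → ℝ)
    (lam : Fin N → ℝ) : Fin N → ℝ :=
  fun k => frob (piMat η C f g lam k) (C k)

/-- `p` is the Euclidean projection of `x` onto the probability simplex. -/
def IsProjSimplex {m : ℕ} (p x : Fin m → ℝ) : Prop :=
  p ∈ stdSimplex ℝ (Fin m) ∧
    ∀ q ∈ stdSimplex ℝ (Fin m),
      vnorm2 (fun k => p k - x k) ≤ vnorm2 (fun k => q k - x k)

/-- Kullback–Leibler divergence KL(v‖w) = Σ_j v_j log(v_j / w_j). -/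
def klVec {m : ℕ} (v w : Fin m → ℝ) : ℝ := ∑ j, v j * Real.log (v j / w j)

/-- The Hamiltonian E(f,g,λ¹,λ²) = F(f,g,λ¹) − (1/(2τ))‖λ¹ − λ²‖₂². -/
def ham {n N : ℕ} (η : ℝ) (C : Fin N → Mat n) (a b : Fin n → ℝ) (τ : ℝ)
    (f g : Fin n → ℝ) (l1 l2 : Fin N → ℝ) : ℝ :=
  Fdual η C a b f g l1 - 1 / (2 * τ) * vnorm2 (fun k => l1 k - l2 k) ^ 2

/-- The rounding procedure Round(A, a, b). -/
def roundMat {n : ℕ} (A : Mat n) (a b : Fin n → ℝ) : Mat n :=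
  let x : Fin n → ℝ := fun i => min (a i / rowSum A i) 1
  let A' : Mat n := fun i j => x i * A i j
  let y : Fin n → ℝ := fun j => min (b j / colSum A' j) 1
  let A'' : Mat n := fun i j => A' i j * y j
  let erra : Fin n → ℝ := fun i => a i - rowSum A'' i
  let errb : Fin n → ℝ := fun j => b j - colSum A'' j
  fun i j => A'' i j + if vnorm1 erra = 0 then 0 else erra i * errb j / vnorm1 erra

/-- The coupling decomposition set Π_{a,b}^N. -/
def coupling {n N : ℕ} (a b : Fin n → ℝ) : Set (Fin N → Mat n) :=
  {P | (∀ k i j, 0 ≤ P k i j) ∧ rowSum (∑ k, P k) = a ∧ colSum (∑ k, P k) = b}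

/-- ℓ(π, λ) = Σ_k λ_k ⟨π^k, C^k⟩. -/
def ell {n N : ℕ} (C : Fin N → Mat n) (P : Fin N → Mat n) (lam : Fin N → ℝ) : ℝ :=
  ∑ k, lam k * frob (P k) (C k)

/-- (P, λ) is an ε-optimal solution of the EOT problem (duality-gap ≤ ε). -/
def epsOptimal {n N : ℕ} (C : Fin N → Mat n) (a b : Fin n → ℝ)
    (P : Fin N → Mat n) (lam : Fin N → ℝ) (ε : ℝ) : Prop :=
  P ∈ coupling (N := N) a b ∧ lam ∈ stdSimplex ℝ (Fin N) ∧
    ∀ μ ∈ stdSimplex ℝ (Fin N), ∀ Q ∈ coupling (N := N) a b,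
      ell C P μ - ell C Q lam ≤ ε

/-- The defining properties of the Margins procedure output (a^k, b^k). -/
def MarginsProp {n N : ℕ} (P : Fin N → Mat n) (b : Fin n → ℝ)
    (ak bk : Fin N → Fin n → ℝ) : Prop :=
  (∀ k, ak k = rowSum (P k)) ∧
  (∀ k j, 0 ≤ bk k j) ∧
  (∀ j, ∑ k, bk k j = b j) ∧
  (∀ k, ∑ j, bk k j = ∑ i, ak k i) ∧
  (∀ j k k', 0 ≤ (bk k j - colSum (P k) j) * (bk k' j - colSum (P k') j))


lemma cs_sum {ι : Type*} [Fintype ι] (u v : ι → ℝ) :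
    (∑ m, u m * v m) ^ 2 ≤ (∑ m, u m ^ 2) * (∑ m, v m ^ 2) :=
  Finset.sum_mul_sq_le_sq_mul_sq _ _ _

lemma center_sum {ι : Type*} [Fintype ι] (p x y : ι → ℝ) (hp1 : ∑ m, p m = 1) :
    ∑ m, p m * ((x m - ∑ m', p m' * x m') * (y m - ∑ m', p m' * y m')) =
      ∑ m, p m * (x m * y m) - (∑ m, p m * x m) * (∑ m, p m * y m) := by
  set xb := ∑ m', p m' * x m' with hxb
  set yb := ∑ m', p m' * y m' with hyb
  have h : ∀ m, p m * ((x m - xb) * (y m - yb)) =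
      p m * (x m * y m) - xb * (p m * y m) - yb * (p m * x m) + (xb * yb) * p m :=
    fun m => by ring
  simp_rw [h, Finset.sum_add_distrib, Finset.sum_sub_distrib, ← Finset.mul_sum, hp1]
  rw [← hxb, ← hyb]; ring

lemma var_nonneg {ι : Type*} [Fintype ι] (p x : ι → ℝ) (hp : ∀ m, 0 ≤ p m)
    (hp1 : ∑ m, p m = 1) :
    (∑ m, p m * x m) ^ 2 ≤ ∑ m, p m * x m ^ 2 := by
  have h := center_sum p x x hp1
  have h0 : 0 ≤ ∑ m, p m * ((x m - ∑ m', p m' * x m') * (x m - ∑ m', p m' * x m')) :=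
    Finset.sum_nonneg fun m _ => mul_nonneg (hp m) (mul_self_nonneg _)
  have h2 : ∀ m, p m * (x m * x m) = p m * x m ^ 2 := fun m => by ring
  simp_rw [h2] at h
  linarith [h.symm ▸ h0]

lemma cov_sq_le {ι : Type*} [Fintype ι] (p u v : ι → ℝ) (hp : ∀ m, 0 ≤ p m)
    (hp1 : ∑ m, p m = 1) :
    (∑ m, p m * (u m * v m) - (∑ m, p m * u m) * (∑ m, p m * v m)) ^ 2 ≤
      (∑ m, p m * u m ^ 2 - (∑ m, p m * u m) ^ 2) *
      (∑ m, p m * v m ^ 2 - (∑ m, p m * v m) ^ 2) := by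
  have e1 := center_sum p u v hp1
  have e2 := center_sum p u u hp1
  have e3 := center_sum p v v hp1
  have key := cs_sum (fun m => Real.sqrt (p m) * (u m - ∑ m', p m' * u m'))
    (fun m => Real.sqrt (p m) * (v m - ∑ m', p m' * v m'))
  have l1 : ∀ m, (Real.sqrt (p m) * (u m - ∑ m', p m' * u m')) *
      (Real.sqrt (p m) * (v m - ∑ m', p m' * v m')) =
      p m * ((u m - ∑ m', p m' * u m') * (v m - ∑ m', p m' * v m')) := fun m => by
    rw [show (Real.sqrt (p m) * (u m - ∑ m', p m' * u m')) *
        (Real.sqrt (p m) * (v m - ∑ m', p m' * v m')) =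
      (Real.sqrt (p m) * Real.sqrt (p m)) *
        ((u m - ∑ m', p m' * u m') * (v m - ∑ m', p m' * v m')) by ring,
      Real.mul_self_sqrt (hp m)]
  have l2 : ∀ m, (Real.sqrt (p m) * (u m - ∑ m', p m' * u m')) ^ 2 =
      p m * ((u m - ∑ m', p m' * u m') * (u m - ∑ m', p m' * u m')) :=
    fun m => by rw [mul_pow, Real.sq_sqrt (hp m)]; ring
  have l3 : ∀ m, (Real.sqrt (p m) * (v m - ∑ m', p m' * v m')) ^ 2 =
      p m * ((v m - ∑ m', p m' * v m') * (v m - ∑ m', p m' * v m')) :=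
    fun m => by rw [mul_pow, Real.sq_sqrt (hp m)]; ring
  simp_rw [l1, l2, l3, e1, e2, e3] at key
  have eu : ∀ m, p m * (u m * u m) = p m * u m ^ 2 := fun m => by ring
  have ev : ∀ m, p m * (v m * v m) = p m * v m ^ 2 := fun m => by ring
  simp_rw [eu, ev] at key
  calc (∑ m, p m * (u m * v m) - (∑ m, p m * u m) * (∑ m, p m * v m)) ^ 2
      ≤ ((∑ m, p m * u m ^ 2) - (∑ m, p m * u m) * (∑ m, p m * u m)) *
        ((∑ m, p m * v m ^ 2) - (∑ m, p m * v m) * (∑ m, p m * v m)) := key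
    _ = _ := by ring

lemma inner_le_vnorm2' {ι : Type*} [Fintype ι] (a b : ι → ℝ) :
    ∑ m, a m * b m ≤ Real.sqrt (∑ m, a m ^ 2) * Real.sqrt (∑ m, b m ^ 2) := by
  have h := cs_sum a b
  calc ∑ m, a m * b m ≤ |∑ m, a m * b m| := le_abs_self _
    _ = Real.sqrt ((∑ m, a m * b m) ^ 2) := (Real.sqrt_sq_eq_abs _).symm
    _ ≤ Real.sqrt ((∑ m, a m ^ 2) * (∑ m, b m ^ 2)) := Real.sqrt_le_sqrt h
    _ = _ := Real.sqrt_mul (Finset.sum_nonneg fun m _ => sq_nonneg _) _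

open Finset
variable {n N : ℕ}

lemma zeta_pos (η : ℝ) (C : Fin N → Mat n) (f g : Fin n → ℝ) (lam : Fin N → ℝ)
    (k : Fin N) (i j : Fin n) : 0 < zeta η C f g lam k i j := Real.exp_pos _

/-- total mass -/
def Wsum (η : ℝ) (C : Fin N → Mat n) (f g : Fin n → ℝ) (lam : Fin N → ℝ) : ℝ :=
  ∑ k, ∑ i, ∑ j, zeta η C f g lam k i j

def Nsum (η : ℝ) (C : Fin N → Mat n) (f g : Fin n → ℝ) (lam : Fin N → ℝ) (k : Fin N) : ℝ :=
  ∑ i, ∑ j, zeta η C f g lam k i j * C k i j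

def Qsum (η : ℝ) (C : Fin N → Mat n) (f g : Fin n → ℝ) (lam : Fin N → ℝ) (k : Fin N) : ℝ :=
  ∑ i, ∑ j, zeta η C f g lam k i j * C k i j ^ 2

lemma sum_mnorm1_zeta (η : ℝ) (C : Fin N → Mat n) (f g : Fin n → ℝ) (lam : Fin N → ℝ) :
    ∑ k, mnorm1 (zeta η C f g lam k) = Wsum η C f g lam := by
  unfold mnorm1 Wsum
  refine Finset.sum_congr rfl fun k _ => Finset.sum_congr rfl fun i _ =>
    Finset.sum_congr rfl fun j _ => abs_of_pos (zeta_pos η C f g lam k i j)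

lemma Wsum_pos (hn : 0 < n) (hN : 0 < N) (η : ℝ) (C : Fin N → Mat n) (f g : Fin n → ℝ)
    (lam : Fin N → ℝ) : 0 < Wsum η C f g lam := by
  haveI : Nonempty (Fin N) := ⟨⟨0, hN⟩⟩
  haveI : Nonempty (Fin n) := ⟨⟨0, hn⟩⟩
  refine Finset.sum_pos (fun k _ => Finset.sum_pos (fun i _ => Finset.sum_pos
    (fun j _ => zeta_pos η C f g lam k i j) Finset.univ_nonempty) Finset.univ_nonempty)
    Finset.univ_nonempty

lemma Fdual_eq (η : ℝ) (C : Fin N → Mat n) (a b f g : Fin n → ℝ) (lam : Fin N → ℝ) :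
    Fdual η C a b f g lam =
      (∑ i, f i * a i) + (∑ j, g j * b j) - η * Real.log (Wsum η C f g lam) - η := by
  rw [Fdual, sum_mnorm1_zeta]

lemma gradLam_eq (η : ℝ) (C : Fin N → Mat n) (f g : Fin n → ℝ) (lam : Fin N → ℝ) (k : Fin N) :
    gradLam η C f g lam k = Nsum η C f g lam k / Wsum η C f g lam := by
  unfold gradLam frob piMat Nsum
  rw [sum_mnorm1_zeta]
  simp_rw [div_mul_eq_mul_div, ← Finset.sum_div]

lemma abs_le_cinf (hn : 0 < n) (hN : 0 < N) (C : Fin N → Mat n) (k : Fin N) (i j : Fin n) :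
    |C k i j| ≤ cinf C := by
  have h1 : |C k i j| ≤ ⨆ j', |C k i j'| :=
    le_ciSup (Set.Finite.bddAbove (Set.finite_range fun j' => |C k i j'|)) j
  have h2 : (⨆ j', |C k i j'|) ≤ ⨆ i', ⨆ j', |C k i' j'| :=
    le_ciSup (Set.Finite.bddAbove (Set.finite_range fun i' => ⨆ j', |C k i' j'|)) i
  have h3 : (⨆ i', ⨆ j', |C k i' j'|) ≤ ⨆ k', ⨆ i', ⨆ j', |C k' i' j'| :=
    le_ciSup (Set.Finite.bddAbove (Set.finite_range fun k' => ⨆ i', ⨆ j', |C k' i' j'|)) k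
  exact le_trans h1 (le_trans h2 h3)

lemma sq_le_cinf_sq (hn : 0 < n) (hN : 0 < N) (C : Fin N → Mat n) (k : Fin N) (i j : Fin n) :
    C k i j ^ 2 ≤ cinf C ^ 2 := by
  have := abs_le_cinf hn hN C k i j
  have h0 : 0 ≤ |C k i j| := abs_nonneg _
  nlinarith [sq_abs (C k i j)]

lemma cinf_nonneg (hn : 0 < n) (hN : 0 < N) (C : Fin N → Mat n) : 0 ≤ cinf C :=
  le_trans (abs_nonneg _) (abs_le_cinf hn hN C ⟨0, hN⟩ ⟨0, hn⟩ ⟨0, hn⟩)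

lemma hasDerivAt_zeta_line (η : ℝ) (hη : η ≠ 0) (C : Fin N → Mat n) (f g : Fin n → ℝ)
    (μ d : Fin N → ℝ) (k : Fin N) (i j : Fin n) (t : ℝ) :
    HasDerivAt (fun s => zeta η C f g (fun k' => μ k' + s * d k') k i j)
      (-(d k * C k i j / η) * zeta η C f g (fun k' => μ k' + t * d k') k i j) t := by
  set c0 := (f i + g j - μ k * C k i j) / η with hc0
  set c1 := -(d k * C k i j / η) with hc1
  have hfun : ∀ s : ℝ, zeta η C f g (fun k' => μ k' + s * d k') k i j
      = Real.exp (c0 + s * c1) := by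
    intro s; unfold zeta; congr 1; rw [hc0, hc1]; field_simp; ring
  have h2 : HasDerivAt (fun s : ℝ => Real.exp (c0 + s * c1))
      (Real.exp (c0 + t * c1) * (1 * c1)) t :=
    (((hasDerivAt_id t).mul_const c1).const_add c0).exp
  simp_rw [hfun]
  convert h2 using 1
  ring

lemma hasDerivAt_Nsum_line (η : ℝ) (hη : η ≠ 0) (C : Fin N → Mat n) (f g : Fin n → ℝ)
    (μ d : Fin N → ℝ) (k : Fin N) (t : ℝ) :
    HasDerivAt (fun s => Nsum η C f g (fun k' => μ k' + s * d k') k)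
      (-(d k / η) * Qsum η C f g (fun k' => μ k' + t * d k') k) t := by
  have h : HasDerivAt (fun s => Nsum η C f g (fun k' => μ k' + s * d k') k)
      (∑ i, ∑ j, -(d k * C k i j / η) * zeta η C f g (fun k' => μ k' + t * d k') k i j
        * C k i j) t := by
    unfold Nsum
    refine HasDerivAt.fun_sum fun i _ => HasDerivAt.fun_sum fun j _ => ?_
    exact (hasDerivAt_zeta_line η hη C f g μ d k i j t).mul_const (C k i j)
  convert h using 1
  unfold Qsum
  rw [Finset.mul_sum]
  refine Finset.sum_congr rfl fun i _ => ?_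
  rw [Finset.mul_sum]
  exact Finset.sum_congr rfl fun j _ => by ring

lemma hasDerivAt_Wsum_line (η : ℝ) (hη : η ≠ 0) (C : Fin N → Mat n) (f g : Fin n → ℝ)
    (μ d : Fin N → ℝ) (t : ℝ) :
    HasDerivAt (fun s => Wsum η C f g (fun k' => μ k' + s * d k'))
      (-(1 / η) * ∑ l, d l * Nsum η C f g (fun k' => μ k' + t * d k') l) t := by
  have h : HasDerivAt (fun s => Wsum η C f g (fun k' => μ k' + s * d k'))
      (∑ l, ∑ i, ∑ j, -(d l * C l i j / η) * zeta η C f g (fun k' => μ k' + t * d k') l i j) t := by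
    unfold Wsum
    refine HasDerivAt.fun_sum fun l _ => HasDerivAt.fun_sum fun i _ => HasDerivAt.fun_sum fun j _ => ?_
    exact hasDerivAt_zeta_line η hη C f g μ d l i j t
  convert h using 1
  unfold Nsum
  rw [Finset.mul_sum]
  refine Finset.sum_congr rfl fun l _ => ?_
  rw [Finset.mul_sum, Finset.mul_sum]
  refine Finset.sum_congr rfl fun i _ => ?_
  rw [Finset.mul_sum, Finset.mul_sum]
  exact Finset.sum_congr rfl fun j _ => by ring

lemma hasDerivAt_gradLam_line (hn : 0 < n) (hN : 0 < N) {η : ℝ} (hη : 0 < η)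
    (C : Fin N → Mat n) (f g : Fin n → ℝ) (μ d : Fin N → ℝ) (k : Fin N) (t : ℝ) :
    HasDerivAt (fun s => gradLam η C f g (fun k' => μ k' + s * d k') k)
      (-(1 / η) * (d k * (Qsum η C f g (fun k' => μ k' + t * d k') k
          / Wsum η C f g (fun k' => μ k' + t * d k'))
        - gradLam η C f g (fun k' => μ k' + t * d k') k
          * ∑ l, d l * gradLam η C f g (fun k' => μ k' + t * d k') l)) t := by
  have hWpos : ∀ s : ℝ, 0 < Wsum η C f g (fun k' => μ k' + s * d k') := fun s =>
    Wsum_pos hn hN η C f g _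
  have h := (hasDerivAt_Nsum_line η hη.ne' C f g μ d k t).fun_div
    (hasDerivAt_Wsum_line η hη.ne' C f g μ d t) (hWpos t).ne'
  simp only [gradLam_eq]
  refine h.congr_deriv ?_
  symm
  have hW := (hWpos t).ne'
  set W := Wsum η C f g (fun k' => μ k' + t * d k')
  set Q := Qsum η C f g (fun k' => μ k' + t * d k') k
  set Nk := Nsum η C f g (fun k' => μ k' + t * d k') k
  have hsum : ∑ l, d l * (Nsum η C f g (fun k' => μ k' + t * d k') l / W)
      = (∑ l, d l * Nsum η C f g (fun k' => μ k' + t * d k') l) / W := by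
    symm
    rw [Finset.sum_div]
    exact Finset.sum_congr rfl fun l _ => (mul_div_assoc _ _ _)
  rw [hsum]
  field_simp
  ring

lemma hasDerivAt_Ex_line (hn : 0 < n) (hN : 0 < N) {η : ℝ} (hη : 0 < η)
    (C : Fin N → Mat n) (f g : Fin n → ℝ) (μ d : Fin N → ℝ) (t : ℝ) :
    HasDerivAt (fun s => ∑ l, d l * gradLam η C f g (fun k' => μ k' + s * d k') l)
      (-(1 / η) * ((∑ k, d k ^ 2 * (Qsum η C f g (fun k' => μ k' + t * d k') k
          / Wsum η C f g (fun k' => μ k' + t * d k')))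
        - (∑ l, d l * gradLam η C f g (fun k' => μ k' + t * d k') l) ^ 2)) t := by
  have h : HasDerivAt (fun s => ∑ l, d l * gradLam η C f g (fun k' => μ k' + s * d k') l)
      (∑ l, d l * (-(1 / η) * (d l * (Qsum η C f g (fun k' => μ k' + t * d k') l
          / Wsum η C f g (fun k' => μ k' + t * d k'))
        - gradLam η C f g (fun k' => μ k' + t * d k') l
          * ∑ l', d l' * gradLam η C f g (fun k' => μ k' + t * d k') l'))) t := by
    refine HasDerivAt.fun_sum fun l _ => ?_
    exact (hasDerivAt_gradLam_line hn hN hη C f g μ d l t).const_mul (d l)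
  convert h using 1
  set W := Wsum η C f g (fun k' => μ k' + t * d k')
  set Ex := ∑ l, d l * gradLam η C f g (fun k' => μ k' + t * d k') l with hEx
  have hterm : ∀ l, d l * (-(1 / η) * (d l * (Qsum η C f g (fun k' => μ k' + t * d k') l / W)
      - gradLam η C f g (fun k' => μ k' + t * d k') l * Ex))
      = -(1 / η) * (d l ^ 2 * (Qsum η C f g (fun k' => μ k' + t * d k') l / W))
        + (1 / η) * Ex * (d l * gradLam η C f g (fun k' => μ k' + t * d k') l) :=
    fun l => by ring
  simp_rw [hterm, Finset.sum_add_distrib, ← Finset.mul_sum, ← hEx]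
  ring

lemma hasDerivAt_phi_line (hn : 0 < n) (hN : 0 < N) {η : ℝ} (hη : 0 < η)
    (C : Fin N → Mat n) (a b f g : Fin n → ℝ) (μ d : Fin N → ℝ) (t : ℝ) :
    HasDerivAt (fun s => Fdual η C a b f g (fun k' => μ k' + s * d k'))
      (∑ l, d l * gradLam η C f g (fun k' => μ k' + t * d k') l) t := by
  have hWpos : ∀ s : ℝ, 0 < Wsum η C f g (fun k' => μ k' + s * d k') := fun s =>
    Wsum_pos hn hN η C f g _
  have hlog := (hasDerivAt_Wsum_line η hη.ne' C f g μ d t).log (hWpos t).ne'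
  have h := ((hlog.const_mul η).const_sub ((∑ i, f i * a i) + (∑ j, g j * b j))).sub_const η
  simp only [Fdual_eq]
  refine h.congr_deriv ?_
  symm
  simp only [gradLam_eq]
  have hsum : ∑ l, d l * (Nsum η C f g (fun k' => μ k' + t * d k') l
      / Wsum η C f g (fun k' => μ k' + t * d k'))
      = (∑ l, d l * Nsum η C f g (fun k' => μ k' + t * d k') l)
        / Wsum η C f g (fun k' => μ k' + t * d k') := by
    symm
    rw [Finset.sum_div]
    exact Finset.sum_congr rfl fun l _ => (mul_div_assoc _ _ _)
  rw [hsum]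
  field_simp
/-- The softmax probability mass over (k,i,j). -/
def pmf (η : ℝ) (C : Fin N → Mat n) (f g : Fin n → ℝ) (lam : Fin N → ℝ) :
    Fin N × Fin n × Fin n → ℝ :=
  fun m => zeta η C f g lam m.1 m.2.1 m.2.2 / Wsum η C f g lam

lemma pmf_nonneg (hn : 0 < n) (hN : 0 < N) (η : ℝ) (C : Fin N → Mat n) (f g : Fin n → ℝ)
    (lam : Fin N → ℝ) (m : Fin N × Fin n × Fin n) : 0 ≤ pmf η C f g lam m :=
  div_nonneg (zeta_pos η C f g lam _ _ _).le (Wsum_pos hn hN η C f g lam).le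

lemma pmf_sum (hn : 0 < n) (hN : 0 < N) (η : ℝ) (C : Fin N → Mat n) (f g : Fin n → ℝ)
    (lam : Fin N → ℝ) : ∑ m, pmf η C f g lam m = 1 := by
  unfold pmf
  rw [Fintype.sum_prod_type]
  simp_rw [Fintype.sum_prod_type, ← Finset.sum_div]
  exact div_self (Wsum_pos hn hN η C f g lam).ne'

/-- Z_k : indicator of block k times cost. -/
def Zf (C : Fin N → Mat n) (k : Fin N) : Fin N × Fin n × Fin n → ℝ :=
  fun m => if m.1 = k then C m.1 m.2.1 m.2.2 else 0

/-- X = d_κ C_κ. -/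
def Xf (C : Fin N → Mat n) (d : Fin N → ℝ) : Fin N × Fin n × Fin n → ℝ :=
  fun m => d m.1 * C m.1 m.2.1 m.2.2

lemma pmf_Z (η : ℝ) (C : Fin N → Mat n) (f g : Fin n → ℝ) (lam : Fin N → ℝ) (k : Fin N) :
    ∑ m, pmf η C f g lam m * Zf C k m = gradLam η C f g lam k := by
  unfold pmf Zf
  rw [Fintype.sum_prod_type]
  simp_rw [Fintype.sum_prod_type]
  have h1 : ∀ k' (i j : Fin n),
      zeta η C f g lam k' i j / Wsum η C f g lam * (if k' = k then C k' i j else 0)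
      = if k' = k then zeta η C f g lam k' i j * C k' i j / Wsum η C f g lam else 0 := by
    intro k' i j
    split
    · ring
    · simp
  simp_rw [h1]
  have h2 : ∀ k' : Fin N,
      (∑ i, ∑ j, if k' = k then zeta η C f g lam k' i j * C k' i j / Wsum η C f g lam else 0)
      = if k' = k then (∑ i, ∑ j, zeta η C f g lam k' i j * C k' i j) / Wsum η C f g lam
        else 0 := by
    intro k'
    split
    · rw [Finset.sum_div]
      exact Finset.sum_congr rfl fun i _ => by rw [Finset.sum_div]
    · simp
  simp_rw [h2]
  rw [Finset.sum_ite_eq' Finset.univ k, if_pos (Finset.mem_univ k), gradLam_eq]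
  rfl

lemma pmf_ZX (η : ℝ) (C : Fin N → Mat n) (f g : Fin n → ℝ) (lam : Fin N → ℝ)
    (d : Fin N → ℝ) (k : Fin N) :
    ∑ m, pmf η C f g lam m * (Zf C k m * Xf C d m)
      = d k * (Qsum η C f g lam k / Wsum η C f g lam) := by
  unfold pmf Zf Xf
  rw [Fintype.sum_prod_type]
  simp_rw [Fintype.sum_prod_type]
  have h1 : ∀ k' (i j : Fin n),
      zeta η C f g lam k' i j / Wsum η C f g lam
        * ((if k' = k then C k' i j else 0) * (d k' * C k' i j))
      = if k' = k then d k * (zeta η C f g lam k' i j * C k' i j ^ 2 / Wsum η C f g lam)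
        else 0 := by
    intro k' i j
    split
    · rename_i h; subst h; ring
    · simp
  simp_rw [h1]
  have h2 : ∀ k' : Fin N,
      (∑ i, ∑ j, if k' = k
          then d k * (zeta η C f g lam k' i j * C k' i j ^ 2 / Wsum η C f g lam) else 0)
      = if k' = k
        then d k * ((∑ i, ∑ j, zeta η C f g lam k' i j * C k' i j ^ 2) / Wsum η C f g lam)
        else 0 := by
    intro k'
    split
    · simp only [Finset.sum_div, Finset.mul_sum]
    · simp
  simp_rw [h2]
  rw [Finset.sum_ite_eq' Finset.univ k, if_pos (Finset.mem_univ k)]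
  rfl

lemma pmf_X (η : ℝ) (C : Fin N → Mat n) (f g : Fin n → ℝ) (lam : Fin N → ℝ) (d : Fin N → ℝ) :
    ∑ m, pmf η C f g lam m * Xf C d m = ∑ l, d l * gradLam η C f g lam l := by
  unfold pmf Xf
  rw [Fintype.sum_prod_type]
  simp_rw [Fintype.sum_prod_type]
  refine Finset.sum_congr rfl fun l _ => ?_
  rw [gradLam_eq]
  unfold Nsum
  simp only [Finset.sum_div, Finset.mul_sum]
  exact Finset.sum_congr rfl fun i _ => Finset.sum_congr rfl fun j _ => by ring

lemma pmf_X2 (η : ℝ) (C : Fin N → Mat n) (f g : Fin n → ℝ) (lam : Fin N → ℝ) (d : Fin N → ℝ) :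
    ∑ m, pmf η C f g lam m * Xf C d m ^ 2
      = ∑ k, d k ^ 2 * (Qsum η C f g lam k / Wsum η C f g lam) := by
  unfold pmf Xf
  rw [Fintype.sum_prod_type]
  simp_rw [Fintype.sum_prod_type]
  refine Finset.sum_congr rfl fun l _ => ?_
  unfold Qsum
  simp only [Finset.sum_div, Finset.mul_sum]
  exact Finset.sum_congr rfl fun i _ => Finset.sum_congr rfl fun j _ => by ring
lemma pmf_Z2_sum_le (hn : 0 < n) (hN : 0 < N) (η : ℝ) (C : Fin N → Mat n) (f g : Fin n → ℝ)
    (lam : Fin N → ℝ) :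
    ∑ k, ∑ m, pmf η C f g lam m * Zf C k m ^ 2 ≤ cinf C ^ 2 := by
  rw [Finset.sum_comm]
  have h1 : ∀ m : Fin N × Fin n × Fin n, ∑ k, pmf η C f g lam m * Zf C k m ^ 2
      = pmf η C f g lam m * C m.1 m.2.1 m.2.2 ^ 2 := by
    intro m
    rw [← Finset.mul_sum]
    congr 1
    unfold Zf
    have h : ∀ k, (if m.1 = k then C m.1 m.2.1 m.2.2 else 0) ^ 2
        = if m.1 = k then C m.1 m.2.1 m.2.2 ^ 2 else 0 := fun k => by split <;> simp
    simp_rw [h]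
    simp [Finset.sum_ite_eq]
  simp_rw [h1]
  calc ∑ m, pmf η C f g lam m * C m.1 m.2.1 m.2.2 ^ 2
      ≤ ∑ m, pmf η C f g lam m * cinf C ^ 2 :=
        Finset.sum_le_sum fun m _ => mul_le_mul_of_nonneg_left
          (sq_le_cinf_sq hn hN C _ _ _) (pmf_nonneg hn hN η C f g lam m)
    _ = cinf C ^ 2 := by rw [← Finset.sum_mul, pmf_sum hn hN, one_mul]

lemma pmf_X2_le (hn : 0 < n) (hN : 0 < N) (η : ℝ) (C : Fin N → Mat n) (f g : Fin n → ℝ)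
    (lam : Fin N → ℝ) (d : Fin N → ℝ) :
    ∑ m, pmf η C f g lam m * Xf C d m ^ 2 ≤ cinf C ^ 2 * ∑ k, d k ^ 2 := by
  have step1 : ∑ m, pmf η C f g lam m * Xf C d m ^ 2
      ≤ cinf C ^ 2 * ∑ m, pmf η C f g lam m * d m.1 ^ 2 := by
    rw [Finset.mul_sum]
    refine Finset.sum_le_sum fun m _ => ?_
    have hC := sq_le_cinf_sq hn hN C m.1 m.2.1 m.2.2
    have hp := pmf_nonneg hn hN η C f g lam m
    unfold Xf
    nlinarith [mul_le_mul_of_nonneg_left hC (mul_nonneg hp (sq_nonneg (d m.1)))]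
  have step2 : ∑ m, pmf η C f g lam m * d m.1 ^ 2 ≤ ∑ k, d k ^ 2 := by
    rw [Fintype.sum_prod_type]
    have hq : ∀ k : Fin N, ∑ q : Fin n × Fin n, pmf η C f g lam (k, q) ≤ 1 := by
      intro k
      have h0 := pmf_sum hn hN η C f g lam
      rw [Fintype.sum_prod_type] at h0
      rw [← h0]
      exact Finset.single_le_sum
        (f := fun k' => ∑ q : Fin n × Fin n, pmf η C f g lam (k', q))
        (fun k' _ => Finset.sum_nonneg fun q _ => pmf_nonneg hn hN η C f g lam _)
        (Finset.mem_univ k)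
    refine Finset.sum_le_sum fun k _ => ?_
    calc ∑ q : Fin n × Fin n, pmf η C f g lam (k, q) * d k ^ 2
        = (∑ q : Fin n × Fin n, pmf η C f g lam (k, q)) * d k ^ 2 := by
          rw [Finset.sum_mul]
      _ ≤ 1 * d k ^ 2 := mul_le_mul_of_nonneg_right (hq k) (sq_nonneg _)
      _ = d k ^ 2 := one_mul _
  calc ∑ m, pmf η C f g lam m * Xf C d m ^ 2
      ≤ cinf C ^ 2 * ∑ m, pmf η C f g lam m * d m.1 ^ 2 := step1
    _ ≤ cinf C ^ 2 * ∑ k, d k ^ 2 := mul_le_mul_of_nonneg_left step2 (sq_nonneg _)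

lemma varX_le (hn : 0 < n) (hN : 0 < N) (η : ℝ) (C : Fin N → Mat n) (f g : Fin n → ℝ)
    (lam : Fin N → ℝ) (d : Fin N → ℝ) :
    (∑ l, d l * gradLam η C f g lam l) ^ 2
      ≤ ∑ k, d k ^ 2 * (Qsum η C f g lam k / Wsum η C f g lam) := by
  have h := var_nonneg (pmf η C f g lam) (Xf C d)
    (pmf_nonneg hn hN η C f g lam) (pmf_sum hn hN η C f g lam)
  rwa [pmf_X, pmf_X2] at h

lemma cov_bound (hn : 0 < n) (hN : 0 < N) (η : ℝ) (C : Fin N → Mat n) (f g : Fin n → ℝ)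
    (lam : Fin N → ℝ) (d : Fin N → ℝ) :
    ∑ k, (d k * (Qsum η C f g lam k / Wsum η C f g lam)
        - gradLam η C f g lam k * ∑ l, d l * gradLam η C f g lam l) ^ 2
      ≤ (cinf C ^ 2) ^ 2 * ∑ k, d k ^ 2 := by
  have hp := pmf_nonneg hn hN η C f g lam
  have hp1 := pmf_sum hn hN η C f g lam
  have hXf2_nonneg : (0:ℝ) ≤ ∑ m, pmf η C f g lam m * Xf C d m ^ 2 :=
    Finset.sum_nonneg fun m _ => mul_nonneg (hp m) (sq_nonneg _)
  have key : ∀ k, (d k * (Qsum η C f g lam k / Wsum η C f g lam)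
        - gradLam η C f g lam k * ∑ l, d l * gradLam η C f g lam l) ^ 2
      ≤ (∑ m, pmf η C f g lam m * Zf C k m ^ 2) * (∑ m, pmf η C f g lam m * Xf C d m ^ 2) := by
    intro k
    have h := cov_sq_le (pmf η C f g lam) (Zf C k) (Xf C d) hp hp1
    rw [pmf_ZX, pmf_Z, pmf_X] at h
    have hA : (0:ℝ) ≤ ∑ m, pmf η C f g lam m * Zf C k m ^ 2 - gradLam η C f g lam k ^ 2 := by
      have := var_nonneg (pmf η C f g lam) (Zf C k) hp hp1
      rw [pmf_Z] at this; linarith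
    have hB : (0:ℝ) ≤ ∑ m, pmf η C f g lam m * Xf C d m ^ 2
        - (∑ l, d l * gradLam η C f g lam l) ^ 2 := by
      have := var_nonneg (pmf η C f g lam) (Xf C d) hp hp1
      rw [pmf_X] at this
      linarith
    refine le_trans h ?_
    have hZ2 : (0:ℝ) ≤ ∑ m, pmf η C f g lam m * Zf C k m ^ 2 :=
      Finset.sum_nonneg fun m _ => mul_nonneg (hp m) (sq_nonneg _)
    nlinarith [sq_nonneg (gradLam η C f g lam k), sq_nonneg (∑ l, d l * gradLam η C f g lam l)]
  calc ∑ k, (d k * (Qsum η C f g lam k / Wsum η C f g lam)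
        - gradLam η C f g lam k * ∑ l, d l * gradLam η C f g lam l) ^ 2
      ≤ ∑ k, (∑ m, pmf η C f g lam m * Zf C k m ^ 2) * (∑ m, pmf η C f g lam m * Xf C d m ^ 2) :=
        Finset.sum_le_sum fun k _ => key k
    _ = (∑ k, ∑ m, pmf η C f g lam m * Zf C k m ^ 2) * (∑ m, pmf η C f g lam m * Xf C d m ^ 2) :=
        (Finset.sum_mul _ _ _).symm
    _ ≤ cinf C ^ 2 * (cinf C ^ 2 * ∑ k, d k ^ 2) := by
        refine mul_le_mul (pmf_Z2_sum_le hn hN η C f g lam) (pmf_X2_le hn hN η C f g lam d)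
          hXf2_nonneg (sq_nonneg _)
    _ = (cinf C ^ 2) ^ 2 * ∑ k, d k ^ 2 := by ring
lemma vnorm2_nonneg {m : ℕ} (v : Fin m → ℝ) : 0 ≤ vnorm2 v := Real.sqrt_nonneg _

lemma vnorm2_sq {m : ℕ} (v : Fin m → ℝ) : vnorm2 v ^ 2 = ∑ i, v i ^ 2 :=
  Real.sq_sqrt (Finset.sum_nonneg fun i _ => sq_nonneg _)

lemma vnorm2_smul {m : ℕ} (t : ℝ) (ht : 0 ≤ t) (v : Fin m → ℝ) :
    vnorm2 (fun k => t * v k) = t * vnorm2 v := by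
  unfold vnorm2
  rw [show ∑ i, (t * v i) ^ 2 = t ^ 2 * ∑ i, v i ^ 2 by
    rw [Finset.mul_sum]; exact Finset.sum_congr rfl fun i _ => by ring]
  rw [Real.sqrt_mul (sq_nonneg t), Real.sqrt_sq ht]

lemma vnorm2_sub_comm {m : ℕ} (a b : Fin m → ℝ) :
    vnorm2 (fun k => a k - b k) = vnorm2 (fun k => b k - a k) := by
  unfold vnorm2
  congr 1
  exact Finset.sum_congr rfl fun i _ => by ring

lemma sum_mul_le_vnorm2 {m : ℕ} (a b : Fin m → ℝ) :
    ∑ i, a i * b i ≤ vnorm2 a * vnorm2 b :=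
  inner_le_vnorm2' a b

/-- The key Lipschitz estimate for the gradient. -/
lemma lipschitz_grad (hn : 0 < n) (hN : 0 < N) {η : ℝ} (hη : 0 < η)
    (C : Fin N → Mat n) (f g : Fin n → ℝ) (μ d : Fin N → ℝ) :
    vnorm2 (fun k => gradLam η C f g (fun k' => μ k' + d k') k - gradLam η C f g μ k)
      ≤ cinf C ^ 2 / η * vnorm2 d := by
  set L := (PiLp.continuousLinearEquiv 2 ℝ (fun _ : Fin N => ℝ)).symm
  set D : ℝ → Fin N → ℝ := fun t k =>
    -(1 / η) * (d k * (Qsum η C f g (fun k' => μ k' + t * d k') k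
        / Wsum η C f g (fun k' => μ k' + t * d k'))
      - gradLam η C f g (fun k' => μ k' + t * d k') k
        * ∑ l, d l * gradLam η C f g (fun k' => μ k' + t * d k') l) with hD
  have hnormL : ∀ v : Fin N → ℝ, ‖L v‖ = vnorm2 v := by
    intro v
    rw [EuclideanSpace.norm_eq]
    unfold vnorm2
    congr 1
    exact Finset.sum_congr rfl fun i _ => by
      rw [show (L v) i = v i from rfl, Real.norm_eq_abs, sq_abs]
  have hderiv : ∀ t : ℝ, HasDerivAt (fun s => L (fun k => gradLam η C f g
      (fun k' => μ k' + s * d k') k)) (L (D t)) t := by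
    intro t
    have hPi : HasDerivAt (fun s => (fun k => gradLam η C f g (fun k' => μ k' + s * d k') k))
        (D t) t :=
      hasDerivAt_pi.2 fun k => hasDerivAt_gradLam_line hn hN hη C f g μ d k t
    exact (L.toContinuousLinearMap.hasFDerivAt).comp_hasDerivAt t hPi
  have hbound : ∀ t ∈ Set.Ico (0:ℝ) 1, ‖L (D t)‖ ≤ cinf C ^ 2 / η * vnorm2 d := by
    intro t _
    rw [hnormL]
    unfold vnorm2
    have hsq : ∑ k, (D t k) ^ 2 ≤ (cinf C ^ 2 / η * vnorm2 d) ^ 2 := by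
      have hterm : ∀ k, (D t k) ^ 2 = (1 / η) ^ 2
          * (d k * (Qsum η C f g (fun k' => μ k' + t * d k') k
              / Wsum η C f g (fun k' => μ k' + t * d k'))
            - gradLam η C f g (fun k' => μ k' + t * d k') k
              * ∑ l, d l * gradLam η C f g (fun k' => μ k' + t * d k') l) ^ 2 :=
        fun k => by rw [hD]; ring
      calc ∑ k, (D t k) ^ 2
          = (1 / η) ^ 2 * ∑ k, (d k * (Qsum η C f g (fun k' => μ k' + t * d k') k
              / Wsum η C f g (fun k' => μ k' + t * d k'))
            - gradLam η C f g (fun k' => μ k' + t * d k') k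
              * ∑ l, d l * gradLam η C f g (fun k' => μ k' + t * d k') l) ^ 2 := by
            rw [Finset.mul_sum]; exact Finset.sum_congr rfl fun k _ => hterm k
        _ ≤ (1 / η) ^ 2 * ((cinf C ^ 2) ^ 2 * ∑ k, d k ^ 2) :=
            mul_le_mul_of_nonneg_left (cov_bound hn hN η C f g _ d) (sq_nonneg _)
        _ = (cinf C ^ 2 / η * vnorm2 d) ^ 2 := by
            rw [mul_pow, vnorm2_sq]; ring
    calc Real.sqrt (∑ k, (D t k) ^ 2) ≤ Real.sqrt ((cinf C ^ 2 / η * vnorm2 d) ^ 2) :=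
          Real.sqrt_le_sqrt hsq
      _ = cinf C ^ 2 / η * vnorm2 d := Real.sqrt_sq
            (mul_nonneg (div_nonneg (sq_nonneg _) hη.le) (vnorm2_nonneg d))
  have hseg := norm_image_sub_le_of_norm_deriv_le_segment_01'
    (f := fun s => L (fun k => gradLam η C f g (fun k' => μ k' + s * d k') k))
    (f' := fun t => L (D t))
    (fun t _ => (hderiv t).hasDerivWithinAt) hbound
  have e1 : (fun k' => μ k' + (1:ℝ) * d k') = fun k' => μ k' + d k' := by
    funext k'; ring
  have e0 : (fun k' => μ k' + (0:ℝ) * d k') = μ := by funext k'; ring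
  rw [e1, e0, ← map_sub, hnormL] at hseg
  exact hseg
lemma line_zero (μ d : Fin N → ℝ) : (fun k' => μ k' + (0:ℝ) * d k') = μ := by
  funext k'; ring

lemma line_one (μ d : Fin N → ℝ) : (fun k' => μ k' + (1:ℝ) * d k') = fun k' => μ k' + d k' := by
  funext k'; ring

/-- Upper gradient inequality (concavity direction). -/
lemma grad_upper (hn : 0 < n) (hN : 0 < N) {η : ℝ} (hη : 0 < η)
    (C : Fin N → Mat n) (a b f g : Fin n → ℝ) (μ d : Fin N → ℝ) :
    Fdual η C a b f g (fun k => μ k + d k)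
      ≤ Fdual η C a b f g μ + ∑ k, gradLam η C f g μ k * d k := by
  set Ex : ℝ → ℝ := fun t => ∑ l, d l * gradLam η C f g (fun k' => μ k' + t * d k') l with hEx
  have hExDeriv : ∀ t : ℝ, HasDerivAt Ex
      (-(1 / η) * ((∑ k, d k ^ 2 * (Qsum η C f g (fun k' => μ k' + t * d k') k
          / Wsum η C f g (fun k' => μ k' + t * d k'))) - Ex t ^ 2)) t :=
    fun t => hasDerivAt_Ex_line hn hN hη C f g μ d t
  have hExAnti : Antitone Ex := by
    apply antitone_of_deriv_nonpos
    · exact fun t => (hExDeriv t).differentiableAt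
    · intro t
      rw [(hExDeriv t).deriv]
      have h := varX_le hn hN η C f g (fun k' => μ k' + t * d k') d
      have h1 : (0:ℝ) ≤ 1 / η := by positivity
      nlinarith [mul_nonneg h1 (sub_nonneg.2 h)]
  set h : ℝ → ℝ := fun t => Fdual η C a b f g (fun k' => μ k' + t * d k') - t * Ex 0 with hh
  have hhD : ∀ t : ℝ, HasDerivAt h (Ex t - Ex 0) t := by
    intro t
    have := (hasDerivAt_phi_line hn hN hη C a b f g μ d t).fun_sub
      ((hasDerivAt_id t).mul_const (Ex 0))
    simpa using this
  have hmono : AntitoneOn h (Set.Icc 0 1) := by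
    apply antitoneOn_of_deriv_nonpos (convex_Icc 0 1)
    · exact fun t _ => (hhD t).differentiableAt.continuousAt.continuousWithinAt
    · exact fun t _ => (hhD t).differentiableAt.differentiableWithinAt
    · intro t ht
      rw [interior_Icc] at ht
      rw [(hhD t).deriv]
      have := hExAnti (le_of_lt ht.1)
      linarith
  have h01 : h 1 ≤ h 0 := hmono (Set.mem_Icc.2 ⟨le_refl 0, zero_le_one⟩)
    (Set.mem_Icc.2 ⟨zero_le_one, le_refl 1⟩) zero_le_one
  rw [hh] at h01
  simp only [line_zero, line_one] at h01
  have hEx0 : Ex 0 = ∑ k, gradLam η C f g μ k * d k := by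
    rw [hEx]
    simp only [line_zero]
    exact Finset.sum_congr rfl fun k _ => by ring
  rw [hEx0] at h01
  linarith

/-- Lower gradient inequality (quadratic error bound). -/
lemma grad_lower (hn : 0 < n) (hN : 0 < N) {η : ℝ} (hη : 0 < η)
    (C : Fin N → Mat n) (a b f g : Fin n → ℝ) (μ d : Fin N → ℝ) :
    Fdual η C a b f g μ + (∑ k, gradLam η C f g μ k * d k)
        - cinf C ^ 2 / (2 * η) * vnorm2 d ^ 2
      ≤ Fdual η C a b f g (fun k => μ k + d k) := by
  set K : ℝ := cinf C ^ 2 / η * vnorm2 d ^ 2 with hK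
  set Ex : ℝ → ℝ := fun t => ∑ l, d l * gradLam η C f g (fun k' => μ k' + t * d k') l with hEx
  have hExdiff : ∀ t : ℝ, Ex 0 - Ex t ≤ K * t ∨ True := fun t => Or.inr trivial
  have hkey : ∀ t : ℝ, 0 ≤ t → Ex 0 - Ex t ≤ K * t := by
    intro t ht
    have hlip := lipschitz_grad hn hN hη C f g μ (fun k => t * d k)
    have hcs : Ex 0 - Ex t ≤ vnorm2 d * vnorm2 (fun l => gradLam η C f g μ l
        - gradLam η C f g (fun k' => μ k' + t * d k') l) := by
      rw [hEx]
      simp only [line_zero]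
      rw [← Finset.sum_sub_distrib]
      have := sum_mul_le_vnorm2 d (fun l => gradLam η C f g μ l
        - gradLam η C f g (fun k' => μ k' + t * d k') l)
      calc ∑ l, (d l * gradLam η C f g μ l
            - d l * gradLam η C f g (fun k' => μ k' + t * d k') l)
          = ∑ l, d l * (gradLam η C f g μ l
            - gradLam η C f g (fun k' => μ k' + t * d k') l) :=
            Finset.sum_congr rfl fun l _ => by ring
        _ ≤ _ := this
    have hsym : vnorm2 (fun l => gradLam η C f g μ l
        - gradLam η C f g (fun k' => μ k' + t * d k') l)
        = vnorm2 (fun l => gradLam η C f g (fun k' => μ k' + t * d k') l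
          - gradLam η C f g μ l) := vnorm2_sub_comm _ _
    have hlip' : vnorm2 (fun l => gradLam η C f g (fun k' => μ k' + t * d k') l
        - gradLam η C f g μ l) ≤ cinf C ^ 2 / η * (t * vnorm2 d) := by
      have := lipschitz_grad hn hN hη C f g μ (fun k => t * d k)
      rwa [vnorm2_smul t ht d] at this
    calc Ex 0 - Ex t ≤ vnorm2 d * vnorm2 (fun l => gradLam η C f g μ l
          - gradLam η C f g (fun k' => μ k' + t * d k') l) := hcs
      _ ≤ vnorm2 d * (cinf C ^ 2 / η * (t * vnorm2 d)) := by
          rw [hsym]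
          exact mul_le_mul_of_nonneg_left hlip' (vnorm2_nonneg d)
      _ = K * t := by rw [hK, vnorm2_sq]; ring_nf; rw [vnorm2_sq]; ring
  set h : ℝ → ℝ := fun t => Fdual η C a b f g (fun k' => μ k' + t * d k')
    - t * Ex 0 + K * t ^ 2 / 2 with hh
  have hhD : ∀ t : ℝ, HasDerivAt h (Ex t - Ex 0 + K * t) t := by
    intro t
    have h1 := (hasDerivAt_phi_line hn hN hη C a b f g μ d t).fun_sub
      ((hasDerivAt_id t).mul_const (Ex 0))
    have h2 : HasDerivAt (fun t : ℝ => K * t ^ 2 / 2) (K * t) t := by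
      have := ((hasDerivAt_pow 2 t).const_mul K).div_const 2
      refine this.congr_deriv ?_
      push_cast
      ring
    have := h1.fun_add h2
    refine this.congr_deriv ?_
    ring
  have hmono : MonotoneOn h (Set.Icc 0 1) := by
    apply monotoneOn_of_deriv_nonneg (convex_Icc 0 1)
    · exact fun t _ => (hhD t).differentiableAt.continuousAt.continuousWithinAt
    · exact fun t _ => (hhD t).differentiableAt.differentiableWithinAt
    · intro t ht
      rw [interior_Icc] at ht
      rw [(hhD t).deriv]
      have := hkey t (le_of_lt ht.1)
      linarith
  have h01 : h 0 ≤ h 1 := hmono (Set.mem_Icc.2 ⟨le_refl 0, zero_le_one⟩)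
    (Set.mem_Icc.2 ⟨zero_le_one, le_refl 1⟩) zero_le_one
  rw [hh] at h01
  simp only [line_zero, line_one] at h01
  have hEx0 : Ex 0 = ∑ k, gradLam η C f g μ k * d k := by
    rw [hEx]
    simp only [line_zero]
    exact Finset.sum_congr rfl fun k _ => by ring
  rw [hEx0] at h01
  have hKval : cinf C ^ 2 / (2 * η) * vnorm2 d ^ 2 = K / 2 := by
    rw [hK, ← div_div]
    ring
  norm_num at h01
  linarith [hKval, h01]

/-- λ ↦ F(f,g,λ) is concave on Δ^N, its gradient is
(c_∞²/η)-Lipschitz on Δ^N, and the corresponding quadratic lower bound holds. -/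
theorem Fdual_lambda_concave_lipschitz
    {n N : ℕ} (hn : 0 < n) (hN : 0 < N)
    (C : Fin N → Mat n) (a b : Fin n → ℝ)
    (ha : a ∈ stdSimplex ℝ (Fin n)) (hb : b ∈ stdSimplex ℝ (Fin n))
    (hb' : ∀ j, 0 < b j)
    (η : ℝ) (hη : 0 < η)
    (f g : Fin n → ℝ) :
    ConcaveOn ℝ (stdSimplex ℝ (Fin N)) (fun lam => Fdual η C a b f g lam) ∧
    (∀ lam₁ ∈ stdSimplex ℝ (Fin N), ∀ lam₂ ∈ stdSimplex ℝ (Fin N),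
      vnorm2 (fun k => gradLam η C f g lam₁ k - gradLam η C f g lam₂ k)
        ≤ cinf C ^ 2 / η * vnorm2 (fun k => lam₁ k - lam₂ k)) ∧
    (∀ lam₁ ∈ stdSimplex ℝ (Fin N), ∀ lam₂ ∈ stdSimplex ℝ (Fin N),
      Fdual η C a b f g lam₂ + (∑ k, gradLam η C f g lam₂ k * (lam₁ k - lam₂ k))
          - cinf C ^ 2 / (2 * η) * vnorm2 (fun k => lam₁ k - lam₂ k) ^ 2
        ≤ Fdual η C a b f g lam₁) := by
  refine ⟨?_, ?_, ?_⟩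
  · -- concavity
    refine ⟨convex_stdSimplex ℝ (Fin N), ?_⟩
    intro x hx y hy p q hp hq hpq
    set z : Fin N → ℝ := p • x + q • y with hz
    have hzk : ∀ k, z k = p * x k + q * y k := fun k => by
      simp [hz, Pi.add_apply, Pi.smul_apply, smul_eq_mul]
    have hx' : (fun k => z k + (x k - z k)) = x := by funext k; ring
    have hy' : (fun k => z k + (y k - z k)) = y := by funext k; ring
    have A1 := grad_upper hn hN hη C a b f g z (fun k => x k - z k)
    have A2 := grad_upper hn hN hη C a b f g z (fun k => y k - z k)
    rw [hx'] at A1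
    rw [hy'] at A2
    have hcomb : p * (∑ k, gradLam η C f g z k * (x k - z k))
        + q * (∑ k, gradLam η C f g z k * (y k - z k)) = 0 := by
      rw [Finset.mul_sum, Finset.mul_sum, ← Finset.sum_add_distrib]
      refine Finset.sum_eq_zero fun k _ => ?_
      have h1 := hzk k
      linear_combination (-(gradLam η C f g z k)) * h1
        - gradLam η C f g z k * z k * hpq
    have B1 := mul_le_mul_of_nonneg_left A1 hp
    have B2 := mul_le_mul_of_nonneg_left A2 hq
    rw [mul_add] at B1 B2
    have hFz : p * Fdual η C a b f g z + q * Fdual η C a b f g z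
        = Fdual η C a b f g z := by rw [← add_mul, hpq, one_mul]
    simp only [smul_eq_mul]
    linarith [B1, B2, hcomb, hFz]
  · -- Lipschitz gradient
    intro lam₁ _ lam₂ _
    have h := lipschitz_grad hn hN hη C f g lam₂ (fun k => lam₁ k - lam₂ k)
    rw [show (fun k' => lam₂ k' + (lam₁ k' - lam₂ k')) = lam₁ from by funext k'; ring] at h
    exact h
  · -- quadratic lower bound
    intro lam₁ _ lam₂ _
    have h := grad_lower hn hN hη C a b f g lam₂ (fun k => lam₁ k - lam₂ k)
    rw [show (fun k => lam₂ k + (lam₁ k - lam₂ k)) = lam₁ from by funext k; ring] at h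
    exact h

end EOT

end
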